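/- arXiv:1308.4604 — 3 statements merged into one kernel-verified Lean document; each statement's English description precedes it below -/
import Mathlib

section
/- Under the hypotheses of the contraction fixed-point above, the fixed point (w, ξ, η) satisfies, with u(τ) = e^{−τ−T} ξ(τ) and v(τ) = e^{τ−T} η(τ): |w(τ) − w₀| ≤ C r² T e^{−2T}, |u(τ) − u₊ e^{−τ−T}| ≤ C r² e^{−2T}, and |v(τ) − v₋ e^{τ−T}| ≤ C r² e^{−2T} for all |τ| ≤ T; moreover if r < C⁻¹ then |u(τ)| ≤ r and |v(τ)| ≤ r for all |τ| ≤ T. -/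
open MeasureTheory Set

lemma shil_aux1 {E : Type*} [NormedAddCommGroup E] [NormedSpace ℝ E]
    (a b c M : ℝ) (hab : a ≤ b) (hM : 0 ≤ M) (φ : ℝ → E) (hφ : Continuous φ)
    (h : ∀ s ∈ Set.Ioc a b, ‖φ s‖ ≤ M * Real.exp (s - c)) :
    ‖∫ s in a..b, φ s‖ ≤ M * (Real.exp (b - c) - Real.exp (a - c)) := by
  have hg : Continuous fun s : ℝ => M * Real.exp (s - c) :=
    continuous_const.mul (Real.continuous_exp.comp (continuous_id.sub continuous_const))
  have hae : ∀ᵐ t ∂(volume.restrict (Set.uIoc a b)), ‖φ t‖ ≤ M * Real.exp (t - c) :=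
    ae_restrict_of_forall_mem measurableSet_uIoc
      (fun t ht => h t (by rwa [Set.uIoc_of_le hab] at ht))
  have key := intervalIntegral.norm_integral_le_abs_of_norm_le hae (hg.intervalIntegrable a b)
  have hval : (∫ s in a..b, M * Real.exp (s - c)) = M * (Real.exp (b - c) - Real.exp (a - c)) := by
    rw [intervalIntegral.integral_const_mul, intervalIntegral.integral_comp_sub_right Real.exp c,
      integral_exp]
  rw [hval] at key
  refine key.trans_eq (abs_of_nonneg ?_)
  have := Real.exp_le_exp.mpr (sub_le_sub_right hab c)
  nlinarith

lemma shil_aux2 {E : Type*} [NormedAddCommGroup E] [NormedSpace ℝ E]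
    (a b c M : ℝ) (hab : a ≤ b) (hM : 0 ≤ M) (φ : ℝ → E) (hφ : Continuous φ)
    (h : ∀ s ∈ Set.Ioc a b, ‖φ s‖ ≤ M * Real.exp (-s - c)) :
    ‖∫ s in a..b, φ s‖ ≤ M * (Real.exp (-a - c) - Real.exp (-b - c)) := by
  have hg : Continuous fun s : ℝ => M * Real.exp (-s - c) :=
    continuous_const.mul (Real.continuous_exp.comp (continuous_neg.sub continuous_const))
  have hae : ∀ᵐ t ∂(volume.restrict (Set.uIoc a b)), ‖φ t‖ ≤ M * Real.exp (-t - c) :=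
    ae_restrict_of_forall_mem measurableSet_uIoc
      (fun t ht => h t (by rwa [Set.uIoc_of_le hab] at ht))
  have key := intervalIntegral.norm_integral_le_abs_of_norm_le hae (hg.intervalIntegrable a b)
  have hval : (∫ s in a..b, M * Real.exp (-s - c))
      = M * (Real.exp (-a - c) - Real.exp (-b - c)) := by
    rw [intervalIntegral.integral_const_mul]
    have : (∫ s in a..b, Real.exp (-s - c))
        = ∫ s in a..b, (fun x => Real.exp (x - c)) (-s) := by norm_num
    rw [this, intervalIntegral.integral_comp_neg (fun x => Real.exp (x - c)),
      intervalIntegral.integral_comp_sub_right Real.exp c, integral_exp]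
  rw [hval] at key
  refine key.trans_eq (abs_of_nonneg ?_)
  have := Real.exp_le_exp.mpr (sub_le_sub_right (neg_le_neg hab) c)
  nlinarith

/-- The Shilnikov integral-equation map `F` associated to the boundary value problem. -/
noncomputable def shilMap {W K : Type*} [NormedAddCommGroup W] [NormedSpace ℝ W]
    [NormedAddCommGroup K] [NormedSpace ℝ K]
    (T : ℝ) (w₀ : W) (uP vM : K)
    (g₁ : W × K × K → ℝ → W) (g₂ g₃ : W × K × K → ℝ → K)
    (f : ℝ → W × K × K) : ℝ → W × K × K :=
  fun τ =>
    (w₀ + ∫ s in (0:ℝ)..τ, Real.exp (-2*T) • g₁ (f s) s,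
     uP + ∫ s in (-T)..τ, Real.exp (s - T) • g₂ (f s) s,
     vM + ∫ s in T..τ, Real.exp (-s - T) • g₃ (f s) s)

/-- Estimates for the Shilnikov fixed point `(w, ξ, η)`: with `u(τ) = e^{−τ−T} ξ(τ)`,
`v(τ) = e^{τ−T} η(τ)`, one has `|w(τ)−w₀| ≤ C r² T e^{−2T}`,
`|u(τ) − u₊e^{−τ−T}| ≤ C r² e^{−2T}`, `|v(τ) − v₋e^{τ−T}| ≤ C r² e^{−2T}`, and if
`r < C⁻¹` then `|u(τ)| ≤ r`, `|v(τ)| ≤ r` for all `|τ| ≤ T`. -/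
theorem stmt5 (m k : ℕ) (C : ℝ) (hC : 0 < C) :
    ∃ r₀ > 0, ∀ r : ℝ, 0 < r → r ≤ r₀ →
    ∀ T : ℝ, 1 ≤ T →
    ∀ (w₀ : EuclideanSpace ℝ (Fin (2*m))) (uP vM : EuclideanSpace ℝ (Fin k)),
      ‖uP‖ ≤ r → ‖vM‖ ≤ r →
    ∀ (g₁ : EuclideanSpace ℝ (Fin (2*m)) × EuclideanSpace ℝ (Fin k) × EuclideanSpace ℝ (Fin k)
        → ℝ → EuclideanSpace ℝ (Fin (2*m)))
      (g₂ g₃ : EuclideanSpace ℝ (Fin (2*m)) × EuclideanSpace ℝ (Fin k) × EuclideanSpace ℝ (Fin k)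
        → ℝ → EuclideanSpace ℝ (Fin k)),
    Continuous (fun p : (EuclideanSpace ℝ (Fin (2*m)) × EuclideanSpace ℝ (Fin k) ×
        EuclideanSpace ℝ (Fin k)) × ℝ => g₁ p.1 p.2) →
    Continuous (fun p : (EuclideanSpace ℝ (Fin (2*m)) × EuclideanSpace ℝ (Fin k) ×
        EuclideanSpace ℝ (Fin k)) × ℝ => g₂ p.1 p.2) →
    Continuous (fun p : (EuclideanSpace ℝ (Fin (2*m)) × EuclideanSpace ℝ (Fin k) ×
        EuclideanSpace ℝ (Fin k)) × ℝ => g₃ p.1 p.2) →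
    (∀ z, ‖z - (w₀, 0, 0)‖ ≤ 2*r → ∀ s ∈ Icc (-T) T,
        ‖g₁ z s‖ ≤ C * r^2 ∧ ‖g₂ z s‖ ≤ C * r^2 ∧ ‖g₃ z s‖ ≤ C * r^2) →
    (∀ z z', ‖z - (w₀, 0, 0)‖ ≤ 2*r → ‖z' - (w₀, 0, 0)‖ ≤ 2*r → ∀ s ∈ Icc (-T) T,
        ‖g₁ z s - g₁ z' s‖ ≤ C * r * ‖z - z'‖ ∧
        ‖g₂ z s - g₂ z' s‖ ≤ C * r * ‖z - z'‖ ∧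
        ‖g₃ z s - g₃ z' s‖ ≤ C * r * ‖z - z'‖) →
    ∀ f : ℝ → EuclideanSpace ℝ (Fin (2*m)) × EuclideanSpace ℝ (Fin k) × EuclideanSpace ℝ (Fin k),
      Continuous f → (∀ τ ∈ Icc (-T) T, ‖f τ - (w₀, 0, 0)‖ ≤ 2*r) →
      (∀ τ ∈ Icc (-T) T, shilMap T w₀ uP vM g₁ g₂ g₃ f τ = f τ) →
      ∀ τ ∈ Icc (-T) T,
        ‖(f τ).1 - w₀‖ ≤ C * r^2 * T * Real.exp (-2*T) ∧
        ‖Real.exp (-τ - T) • (f τ).2.1 - Real.exp (-τ - T) • uP‖ ≤ C * r^2 * Real.exp (-2*T) ∧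
        ‖Real.exp (τ - T) • (f τ).2.2 - Real.exp (τ - T) • vM‖ ≤ C * r^2 * Real.exp (-2*T) ∧
        (r < C⁻¹ →
          ‖Real.exp (-τ - T) • (f τ).2.1‖ ≤ r ∧ ‖Real.exp (τ - T) • (f τ).2.2‖ ≤ r) := by
  refine ⟨1, one_pos, ?_⟩
  intro r hr _hr1 T hT w₀ uP vM huP hvM g₁ g₂ g₃ hg₁ hg₂ hg₃ hb _hlip f hf hball hfix τ hτ
  obtain ⟨hτ1, hτ2⟩ := hτ
  have hCr2 : (0:ℝ) ≤ C * r ^ 2 := by positivity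
  have hbs : ∀ s ∈ Icc (-T) T,
      ‖g₁ (f s) s‖ ≤ C*r^2 ∧ ‖g₂ (f s) s‖ ≤ C*r^2 ∧ ‖g₃ (f s) s‖ ≤ C*r^2 :=
    fun s hs => hb (f s) (hball s hs) s hs
  -- component identities
  have h1 : (f τ).1 - w₀ = ∫ s in (0:ℝ)..τ, Real.exp (-2*T) • g₁ (f s) s := by
    conv_lhs => rw [← hfix τ ⟨hτ1, hτ2⟩]
    simp [shilMap]
  have h2 : (f τ).2.1 - uP = ∫ s in (-T)..τ, Real.exp (s - T) • g₂ (f s) s := by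
    conv_lhs => rw [← hfix τ ⟨hτ1, hτ2⟩]
    simp [shilMap]
  have h3 : (f τ).2.2 - vM = ∫ s in T..τ, Real.exp (-s - T) • g₃ (f s) s := by
    conv_lhs => rw [← hfix τ ⟨hτ1, hτ2⟩]
    simp [shilMap]
  -- part 1
  have p1 : ‖(f τ).1 - w₀‖ ≤ C * r^2 * T * Real.exp (-2*T) := by
    rw [h1]
    have hbd : ∀ s ∈ Set.uIoc (0:ℝ) τ,
        ‖Real.exp (-2*T) • g₁ (f s) s‖ ≤ Real.exp (-2*T) * (C*r^2) := by
      intro s hs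
      have hsI : s ∈ Icc (-T) T := by
        rcases Set.mem_uIoc.mp hs with h | h
        · exact ⟨by linarith [h.1], by linarith [h.2]⟩
        · exact ⟨by linarith [h.1], by linarith [h.2]⟩
      rw [norm_smul, Real.norm_eq_abs, abs_of_pos (Real.exp_pos _)]
      exact mul_le_mul_of_nonneg_left (hbs s hsI).1 (Real.exp_pos _).le
    have key := intervalIntegral.norm_integral_le_of_norm_le_const hbd
    have habs : |τ - 0| ≤ T := by rw [sub_zero]; exact abs_le.mpr ⟨hτ1, hτ2⟩
    calc ‖∫ s in (0:ℝ)..τ, Real.exp (-2*T) • g₁ (f s) s‖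
        ≤ Real.exp (-2*T) * (C*r^2) * |τ - 0| := key
      _ ≤ Real.exp (-2*T) * (C*r^2) * T :=
          mul_le_mul_of_nonneg_left habs (by positivity)
      _ = C * r^2 * T * Real.exp (-2*T) := by ring
  -- part 2
  have hint2 : ‖∫ s in (-T)..τ, Real.exp (s - T) • g₂ (f s) s‖
      ≤ C*r^2 * (Real.exp (τ - T) - Real.exp (-T - T)) := by
    refine shil_aux1 (-T) τ T (C*r^2) hτ1 hCr2 _
      ((Real.continuous_exp.comp (continuous_id.sub continuous_const)).smul
        (hg₂.comp (hf.prodMk continuous_id))) ?_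
    intro s hs
    have hsI : s ∈ Icc (-T) T := ⟨hs.1.le, hs.2.trans hτ2⟩
    rw [norm_smul, Real.norm_eq_abs, abs_of_pos (Real.exp_pos _), mul_comm]
    exact mul_le_mul_of_nonneg_right (hbs s hsI).2.1 (Real.exp_pos _).le
  have eA : Real.exp (-τ - T) * Real.exp (τ - T) = Real.exp (-2*T) := by
    rw [← Real.exp_add]; ring_nf
  have eTT : Real.exp (-T - T) = Real.exp (-2*T) := by ring_nf
  have hξ : ‖Real.exp (-τ - T) • (f τ).2.1 - Real.exp (-τ - T) • uP‖
      ≤ C*r^2 * ((1 - Real.exp (-τ - T)) * Real.exp (-2*T)) := by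
    rw [← smul_sub, h2, norm_smul, Real.norm_eq_abs, abs_of_pos (Real.exp_pos _)]
    calc Real.exp (-τ - T) * ‖∫ s in (-T)..τ, Real.exp (s - T) • g₂ (f s) s‖
        ≤ Real.exp (-τ - T) * (C*r^2 * (Real.exp (τ - T) - Real.exp (-T - T))) :=
          mul_le_mul_of_nonneg_left hint2 (Real.exp_pos _).le
      _ = C*r^2 * ((1 - Real.exp (-τ - T)) * Real.exp (-2*T)) := by
          rw [eTT]; linear_combination (C*r^2) * eA
  have p2 : ‖Real.exp (-τ - T) • (f τ).2.1 - Real.exp (-τ - T) • uP‖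
      ≤ C * r^2 * Real.exp (-2*T) := by
    refine hξ.trans ?_
    calc C*r^2 * ((1 - Real.exp (-τ - T)) * Real.exp (-2*T))
        ≤ C*r^2 * (1 * Real.exp (-2*T)) := mul_le_mul_of_nonneg_left
          (mul_le_mul_of_nonneg_right (by linarith [Real.exp_pos (-τ - T)])
            (Real.exp_pos _).le) hCr2
      _ = C * r^2 * Real.exp (-2*T) := by ring
  -- part 3
  have hint3 : ‖∫ s in T..τ, Real.exp (-s - T) • g₃ (f s) s‖
      ≤ C*r^2 * (Real.exp (-τ - T) - Real.exp (-T - T)) := by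
    rw [intervalIntegral.integral_symm, norm_neg]
    refine shil_aux2 τ T T (C*r^2) hτ2 hCr2 _
      ((Real.continuous_exp.comp (continuous_neg.sub continuous_const)).smul
        (hg₃.comp (hf.prodMk continuous_id))) ?_
    intro s hs
    have hsI : s ∈ Icc (-T) T := ⟨hτ1.trans hs.1.le, hs.2⟩
    rw [norm_smul, Real.norm_eq_abs, abs_of_pos (Real.exp_pos _), mul_comm]
    exact mul_le_mul_of_nonneg_right (hbs s hsI).2.2 (Real.exp_pos _).le
  have eB : Real.exp (τ - T) * Real.exp (-τ - T) = Real.exp (-2*T) := by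
    rw [← Real.exp_add]; ring_nf
  have hη : ‖Real.exp (τ - T) • (f τ).2.2 - Real.exp (τ - T) • vM‖
      ≤ C*r^2 * ((1 - Real.exp (τ - T)) * Real.exp (-2*T)) := by
    rw [← smul_sub, h3, norm_smul, Real.norm_eq_abs, abs_of_pos (Real.exp_pos _)]
    calc Real.exp (τ - T) * ‖∫ s in T..τ, Real.exp (-s - T) • g₃ (f s) s‖
        ≤ Real.exp (τ - T) * (C*r^2 * (Real.exp (-τ - T) - Real.exp (-T - T))) :=
          mul_le_mul_of_nonneg_left hint3 (Real.exp_pos _).le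
      _ = C*r^2 * ((1 - Real.exp (τ - T)) * Real.exp (-2*T)) := by
          rw [eTT]; linear_combination (C*r^2) * eB
  have p3 : ‖Real.exp (τ - T) • (f τ).2.2 - Real.exp (τ - T) • vM‖
      ≤ C * r^2 * Real.exp (-2*T) := by
    refine hη.trans ?_
    calc C*r^2 * ((1 - Real.exp (τ - T)) * Real.exp (-2*T))
        ≤ C*r^2 * (1 * Real.exp (-2*T)) := mul_le_mul_of_nonneg_left
          (mul_le_mul_of_nonneg_right (by linarith [Real.exp_pos (τ - T)])
            (Real.exp_pos _).le) hCr2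
      _ = C * r^2 * Real.exp (-2*T) := by ring
  refine ⟨p1, p2, p3, ?_⟩
  intro hrC
  have hCr1 : C * r < 1 := by
    have := mul_lt_mul_of_pos_left hrC hC
    rwa [mul_inv_cancel₀ hC.ne'] at this
  have hB1 : Real.exp (-2*T) ≤ 1 := Real.exp_le_one_iff.mpr (by linarith)
  have hA1 : Real.exp (-τ - T) ≤ 1 := Real.exp_le_one_iff.mpr (by linarith)
  have hA1' : Real.exp (τ - T) ≤ 1 := Real.exp_le_one_iff.mpr (by linarith)
  have h4 : C * r * Real.exp (-2*T) ≤ 1 := by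
    calc C * r * Real.exp (-2*T) ≤ C * r * 1 :=
          mul_le_mul_of_nonneg_left hB1 (by positivity)
      _ ≤ 1 := by linarith
  have h5 : ∀ A : ℝ, 0 < A → A ≤ 1 →
      C*r^2 * ((1 - A) * Real.exp (-2*T)) + A * r ≤ r := by
    intro A hA0 hA1
    have h6 := mul_le_mul_of_nonneg_right h4 (mul_nonneg hr.le (sub_nonneg.mpr hA1))
    have e : C*r*Real.exp (-2*T) * (r*(1-A)) = C*r^2 * ((1 - A) * Real.exp (-2*T)) := by ring
    rw [e, one_mul] at h6
    linarith
  constructor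
  · calc ‖Real.exp (-τ - T) • (f τ).2.1‖
        ≤ ‖Real.exp (-τ - T) • (f τ).2.1 - Real.exp (-τ - T) • uP‖
          + ‖Real.exp (-τ - T) • uP‖ := by
          simpa using norm_add_le (Real.exp (-τ - T) • (f τ).2.1 - Real.exp (-τ - T) • uP)
            (Real.exp (-τ - T) • uP)
      _ ≤ C*r^2 * ((1 - Real.exp (-τ - T)) * Real.exp (-2*T)) + Real.exp (-τ - T) * r := by
          gcongr
          rw [norm_smul, Real.norm_eq_abs, abs_of_pos (Real.exp_pos _)]
          exact mul_le_mul_of_nonneg_left huP (Real.exp_pos _).le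
      _ ≤ r := h5 _ (Real.exp_pos _) hA1
  · calc ‖Real.exp (τ - T) • (f τ).2.2‖
        ≤ ‖Real.exp (τ - T) • (f τ).2.2 - Real.exp (τ - T) • vM‖
          + ‖Real.exp (τ - T) • vM‖ := by
          simpa using norm_add_le (Real.exp (τ - T) • (f τ).2.2 - Real.exp (τ - T) • vM)
            (Real.exp (τ - T) • vM)
      _ ≤ C*r^2 * ((1 - Real.exp (τ - T)) * Real.exp (-2*T)) + Real.exp (τ - T) * r := by
          gcongr
          rw [norm_smul, Real.norm_eq_abs, abs_of_pos (Real.exp_pos _)]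
          exact mul_le_mul_of_nonneg_left hvM (Real.exp_pos _).le
      _ ≤ r := h5 _ (Real.exp_pos _) hA1'
end

section
/- Let f(x, y) be a C² function of two (vector) variables and suppose y = h(x) is a C¹ family of critical points of y ↦ f(x, y) which are nondegenerate (the Hessian ∂²f/∂y² (x, h(x)) is invertible). Set g(x) = f(x, h(x)). Then a point (x₀, y₀) with y₀ = h(x₀) is a nondegenerate critical point of f if and only if x₀ is a nondegenerate critical point of g. -/
open ContinuousLinearMap

lemma finrank_clm_real (V : Type*) [NormedAddCommGroup V] [NormedSpace ℝ V]
    [FiniteDimensional ℝ V] :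
    Module.finrank ℝ (V →L[ℝ] ℝ) = Module.finrank ℝ V := by
  rw [← (LinearMap.toContinuousLinearMap :
      (V →ₗ[ℝ] ℝ) ≃ₗ[ℝ] (V →L[ℝ] ℝ)).finrank_eq]
  exact Module.finrank_linearMap_self ℝ ℝ V

lemma clm_bij_of_inj {V W : Type*} [NormedAddCommGroup V] [NormedSpace ℝ V]
    [NormedAddCommGroup W] [NormedSpace ℝ W] [FiniteDimensional ℝ V] [FiniteDimensional ℝ W]
    (L : V →L[ℝ] W) (hrank : Module.finrank ℝ V = Module.finrank ℝ W)
    (hinj : Function.Injective L) : Function.Bijective L :=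
  ⟨hinj, (LinearMap.injective_iff_surjective_of_finrank_eq_finrank
    (f := (L : V →ₗ[ℝ] W)) hrank).mp hinj⟩

lemma key_bij {E F : Type*} [NormedAddCommGroup E] [NormedSpace ℝ E]
    [NormedAddCommGroup F] [NormedSpace ℝ F] [FiniteDimensional ℝ E] [FiniteDimensional ℝ F]
    (Φ : (E × F) →L[ℝ] ((E × F) →L[ℝ] ℝ)) (H : E →L[ℝ] F)
    (S : E →L[ℝ] (E →L[ℝ] ℝ)) (C : F →L[ℝ] (F →L[ℝ] ℝ))
    (hS : ∀ u v, S u v = Φ (u, H u) (v, 0))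
    (hmix : ∀ u w, Φ (u, H u) (0, w) = 0)
    (hCdef : ∀ w w', C w w' = Φ (0, w) (0, w'))
    (hC : Function.Injective C) :
    Function.Bijective ⇑Φ ↔ Function.Bijective ⇑S := by
  constructor
  · intro hΦ
    apply clm_bij_of_inj _ (by rw [finrank_clm_real])
    rw [injective_iff_map_eq_zero]
    intro u hu
    have h1 : Φ (u, H u) = 0 := by
      apply ContinuousLinearMap.ext
      rintro ⟨v, w⟩
      have : ((v, w) : E × F) = (v, 0) + (0, w) := by simp
      rw [this, map_add]
      have := hS u v
      rw [hu] at this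
      simp only [ContinuousLinearMap.zero_apply] at this
      simp [← this, hmix u w]
    have h2 : ((u, H u) : E × F) = 0 := hΦ.injective (by simp [h1])
    exact (Prod.ext_iff.mp h2).1
  · intro hSb
    apply clm_bij_of_inj _ (by rw [finrank_clm_real])
    rw [injective_iff_map_eq_zero]
    rintro ⟨u, w⟩ hp
    have hwu : w = H u := by
      have hC0 : C (w - H u) = 0 := by
        ext w'
        have e1 : ((0, w - H u) : E × F) = (u, w) - (u, H u) := by simp
        rw [hCdef, e1, map_sub]
        simp [hp, hmix u w']
      have := hC (by rw [hC0]; simp : C (w - H u) = C 0)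
      simpa [sub_eq_zero] using this
    have hu0 : u = 0 := by
      have hSu : S u = 0 := by
        ext v
        rw [hS u v, ← hwu, hp]
        simp
      have := hSb.injective (by rw [hSu]; simp : S u = S 0)
      simpa using this
    simp [hu0, hwu, Prod.ext_iff, map_zero]

set_option maxHeartbeats 2000000 in
lemma main_aux {E F : Type*} [NormedAddCommGroup E] [NormedSpace ℝ E]
    [NormedAddCommGroup F] [NormedSpace ℝ F] [FiniteDimensional ℝ E] [FiniteDimensional ℝ F]
    (f : E × F → ℝ) (h : E → F)
    (hf : ContDiff ℝ 2 f) (hh : ContDiff ℝ 1 h) (x₀ : E)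
    (hcrit : ∀ᶠ x in nhds x₀, fderiv ℝ (fun y => f (x, y)) (h x) = 0)
    (hhess : ∀ᶠ x in nhds x₀,
      Function.Bijective ⇑(fderiv ℝ (fun y => fderiv ℝ (fun y' => f (x, y')) y) (h x))) :
    (fderiv ℝ f (x₀, h x₀) = 0 ∧
        Function.Bijective ⇑(fderiv ℝ (fun p => fderiv ℝ f p) (x₀, h x₀))) ↔
      (fderiv ℝ (fun x => f (x, h x)) x₀ = 0 ∧
        Function.Bijective
          ⇑(fderiv ℝ (fun x => fderiv ℝ (fun x' => f (x', h x')) x) x₀)) := by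
  have hfd : Differentiable ℝ f := hf.differentiable two_ne_zero
  have hhd : Differentiable ℝ h := hh.differentiable one_ne_zero
  have hF1 : ContDiff ℝ 1 (fderiv ℝ f) := hf.fderiv_right (by norm_num)
  have hF1d : Differentiable ℝ (fderiv ℝ f) := hF1.differentiable one_ne_zero
  have hpart : ∀ (x : E) (y : F), fderiv ℝ (fun y' => f (x, y')) y
      = (fderiv ℝ f (x, y)).comp (inr ℝ E F) := fun x y =>
    ((hfd (x, y)).hasFDerivAt.comp y (hasFDerivAt_prodMk_right x y)).fderiv
  have hk : ∀ x : E, HasFDerivAt (fun x' => (x', h x'))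
      ((ContinuousLinearMap.id ℝ E).prod (fderiv ℝ h x)) x := fun x =>
    HasFDerivAt.prodMk (hasFDerivAt_id x) (hhd x).hasFDerivAt
  set H := fderiv ℝ h x₀ with hHdef
  set Φ := fderiv ℝ (fderiv ℝ f) (x₀, h x₀) with hPhidef
  set Dk := (ContinuousLinearMap.id ℝ E).prod H with hDkdef
  have hFk : HasFDerivAt (fun x => fderiv ℝ f (x, h x)) (Φ.comp Dk) x₀ :=
    (hF1d (x₀, h x₀)).hasFDerivAt.comp x₀ (hk x₀)
  set PL : ((E × F) →L[ℝ] ℝ) →L[ℝ] (E →L[ℝ] ℝ) := (compL ℝ E (E × F) ℝ).flip (inl ℝ E F)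
    with hPLdef
  set PR : ((E × F) →L[ℝ] ℝ) →L[ℝ] (F →L[ℝ] ℝ) := (compL ℝ F (E × F) ℝ).flip (inr ℝ E F)
    with hPRdef
  have hgev : (fun x => fderiv ℝ (fun x' => f (x', h x')) x) =ᶠ[nhds x₀]
      fun x => (fderiv ℝ f (x, h x)).comp (inl ℝ E F) := by
    filter_upwards [hcrit] with x hx
    have hg' : HasFDerivAt (fun x' => f (x', h x'))
        ((fderiv ℝ f (x, h x)).comp ((ContinuousLinearMap.id ℝ E).prod (fderiv ℝ h x))) x :=
      (hfd (x, h x)).hasFDerivAt.comp x (hk x)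
    rw [hg'.fderiv]
    ext u
    have hz : (fderiv ℝ f (x, h x)) (0, fderiv ℝ h x u) = 0 := by
      have := congrArg (fun (L : F →L[ℝ] ℝ) => L (fderiv ℝ h x u))
        ((hpart x (h x)).symm.trans hx)
      simpa using this
    have he : ((u, fderiv ℝ h x u) : E × F) = (u, 0) + (0, fderiv ℝ h x u) := by simp
    simp only [comp_apply, prod_apply, coe_id', id_eq, inl_apply]
    rw [he, map_add, hz, add_zero]
  have hmixL : PR.comp (Φ.comp Dk) = 0 := by
    have hev0 : (fun x => (fderiv ℝ f (x, h x)).comp (inr ℝ E F)) =ᶠ[nhds x₀]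
        (fun _ => (0 : F →L[ℝ] ℝ)) := by
      filter_upwards [hcrit] with x hx
      rw [← hpart x (h x), hx]
    have hd : HasFDerivAt (fun x => (fderiv ℝ f (x, h x)).comp (inr ℝ E F))
        (PR.comp (Φ.comp Dk)) x₀ :=
      by have := (PR.hasFDerivAt (x := fderiv ℝ f (x₀, h x₀))).comp x₀ hFk; exact this
    have h1 := hd.fderiv
    rw [hev0.fderiv_eq] at h1
    rw [fderiv_const_apply] at h1
    exact h1.symm
  have hmix : ∀ (u : E) (w : F), Φ (u, H u) (0, w) = 0 := by
    intro u w
    have := congrArg (fun (L : E →L[ℝ] (F →L[ℝ] ℝ)) => L u w) hmixL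
    simpa [hPRdef, hDkdef] using this
  have hSdef : fderiv ℝ (fun x => fderiv ℝ (fun x' => f (x', h x')) x) x₀
      = PL.comp (Φ.comp Dk) := by
    rw [hgev.fderiv_eq]
    exact ((PL.hasFDerivAt (x := fderiv ℝ f (x₀, h x₀))).comp x₀ hFk).fderiv
  have hCdef : fderiv ℝ (fun y => fderiv ℝ (fun y' => f (x₀, y')) y) (h x₀)
      = PR.comp (Φ.comp (inr ℝ E F)) := by
    have he : (fun y : F => fderiv ℝ (fun y' => f (x₀, y')) y)
        = fun y => (fderiv ℝ f (x₀, y)).comp (inr ℝ E F) := funext fun y => hpart x₀ y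
    rw [he]
    have hin : HasFDerivAt (fun y : F => fderiv ℝ f (x₀, y)) (Φ.comp (inr ℝ E F)) (h x₀) :=
      (hF1d (x₀, h x₀)).hasFDerivAt.comp (h x₀) (hasFDerivAt_prodMk_right x₀ (h x₀))
    exact ((PR.hasFDerivAt (x := fderiv ℝ f (x₀, h x₀))).comp (h x₀) hin).fderiv
  have hCbij : Function.Bijective ⇑(PR.comp (Φ.comp (inr ℝ E F))) := by
    rw [← hCdef]; exact hhess.self_of_nhds
  have hDfinr : (fderiv ℝ f (x₀, h x₀)).comp (inr ℝ E F) = 0 := by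
    rw [← hpart x₀ (h x₀)]; exact hcrit.self_of_nhds
  have part1 : fderiv ℝ f (x₀, h x₀) = 0 ↔ fderiv ℝ (fun x => f (x, h x)) x₀ = 0 := by
    have h00 : fderiv ℝ (fun x => f (x, h x)) x₀
        = (fderiv ℝ f (x₀, h x₀)).comp (inl ℝ E F) := hgev.self_of_nhds
    rw [h00]
    constructor
    · intro h0; rw [h0]; exact zero_comp _
    · intro h0
      apply ContinuousLinearMap.ext
      rintro ⟨u, w⟩
      have he : ((u, w) : E × F) = (u, 0) + (0, w) := by simp
      rw [he, map_add]
      have h1 : (fderiv ℝ f (x₀, h x₀)) (u, 0) = 0 := by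
        have := congrArg (fun (L : E →L[ℝ] ℝ) => L u) h0
        simpa using this
      have h2 : (fderiv ℝ f (x₀, h x₀)) (0, w) = 0 := by
        have := congrArg (fun (L : F →L[ℝ] ℝ) => L w) hDfinr
        simpa using this
      simp [h1, h2]
  have part2 : Function.Bijective ⇑(fderiv ℝ (fun p => fderiv ℝ f p) (x₀, h x₀)) ↔
      Function.Bijective
        ⇑(fderiv ℝ (fun x => fderiv ℝ (fun x' => f (x', h x')) x) x₀) := by
    rw [hSdef]
    have hrfl : fderiv ℝ (fun p => fderiv ℝ f p) (x₀, h x₀) = Φ := rfl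
    rw [hrfl]
    exact key_bij Φ H (PL.comp (Φ.comp Dk)) (PR.comp (Φ.comp (inr ℝ E F)))
      (fun u v => by simp [hPLdef, hDkdef]) hmix
      (fun w w' => by simp [hPRdef]) hCbij.injective
  exact and_congr part1 part2

/-- If `y = h(x)` is a family of nondegenerate critical points of `y ↦ f(x, y)` and
`g(x) = f(x, h(x))`, then `(x₀, h(x₀))` is a nondegenerate critical point of `f` iff
`x₀` is a nondegenerate critical point of `g`. -/
theorem stmt6 (n m : ℕ)
    (f : EuclideanSpace ℝ (Fin n) × EuclideanSpace ℝ (Fin m) → ℝ)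
    (h : EuclideanSpace ℝ (Fin n) → EuclideanSpace ℝ (Fin m))
    (hf : ContDiff ℝ 2 f) (hh : ContDiff ℝ 1 h)
    (x₀ : EuclideanSpace ℝ (Fin n)) (y₀ : EuclideanSpace ℝ (Fin m)) (hy₀ : y₀ = h x₀)
    (hcrit : ∀ᶠ x in nhds x₀, fderiv ℝ (fun y => f (x, y)) (h x) = 0)
    (hhess : ∀ᶠ x in nhds x₀,
      Function.Bijective ⇑(fderiv ℝ (fun y => fderiv ℝ (fun y' => f (x, y')) y) (h x))) :
    (fderiv ℝ f (x₀, y₀) = 0 ∧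
        Function.Bijective ⇑(fderiv ℝ (fun p => fderiv ℝ f p) (x₀, y₀))) ↔
      (fderiv ℝ (fun x => f (x, h x)) x₀ = 0 ∧
        Function.Bijective
          ⇑(fderiv ℝ (fun x => fderiv ℝ (fun x' => f (x', h x')) x) x₀)) := by
  subst hy₀
  exact main_aux f h hf hh x₀ hcrit hhess
end

section
/- Let λ > 0, κ > 0, r > 0 and let a = −λ ⟨v₊, v₋⟩ where ⟨v₊, v₋⟩ ≤ −κ r². Consider the equation e^{−2λT} · a · (1 + R(T)) = μ in the unknown T, where R is smooth with |R(T)| ≤ C e^{−λT}. Then for μ > 0 sufficiently small there exists a unique large solution T(μ), and T(μ) = (|ln μ| + ln a)/(2λ) + O(√μ) as μ → 0⁺. -/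
/-- `|log(1+x)| ≤ 2|x|` for `|x| ≤ 1/2`. -/
lemma aux_abs_log_le (x : ℝ) (hx : |x| ≤ 1/2) : |Real.log (1 + x)| ≤ 2 * |x| := by
  obtain ⟨hx1, hx2⟩ := abs_le.mp hx
  have h1x : (0:ℝ) < 1 + x := by linarith
  rw [abs_le]
  constructor
  · -- lower bound
    have hinv : Real.log ((1+x)⁻¹) ≤ (1+x)⁻¹ - 1 :=
      Real.log_le_sub_one_of_pos (by positivity)
    rw [Real.log_inv] at hinv
    have hmul : (1+x) * (1+x)⁻¹ = 1 := mul_inv_cancel₀ (ne_of_gt h1x)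
    have hineq : (1+x)⁻¹ - 1 ≤ 2 * |x| := by
      rcases le_or_gt 0 x with h | h
      · have : (1+x)⁻¹ ≤ 1 := by
          rw [inv_le_one_iff₀]; right; linarith
        have : (1+x)⁻¹ - 1 ≤ 0 := by linarith
        have : (0:ℝ) ≤ 2 * |x| := by positivity
        linarith
      · rw [abs_of_neg h]
        have hinvpos : 0 < (1+x)⁻¹ := by positivity
        nlinarith [hmul]
    linarith
  · have h2 : Real.log (1+x) ≤ (1+x) - 1 := Real.log_le_sub_one_of_pos h1x
    have h3 : x ≤ |x| := le_abs_self x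
    have : (0:ℝ) ≤ |x| := abs_nonneg x
    linarith

set_option maxHeartbeats 1000000 in
/-- Solving `e^{−2λT} a (1 + R(T)) = μ` for `T`, where `a = −λ⟨v₊, v₋⟩ ≥ λκr² > 0` and
`|R(T)|, |R'(T)| ≤ C e^{−λT}`: for small `μ > 0` there is a unique large solution `T(μ)`,
with `T(μ) = (|ln μ| + ln a)/(2λ) + O(√μ)`. -/
theorem stmt7 (k : ℕ) (lam kap r C T₀ : ℝ)
    (hlam : 0 < lam) (hkap : 0 < kap) (hr : 0 < r) (hC : 0 < C)
    (vP vM : EuclideanSpace ℝ (Fin k))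
    (hinner : (inner ℝ vP vM : ℝ) ≤ -kap * r^2)
    (a : ℝ) (ha : a = -lam * (inner ℝ vP vM : ℝ))
    (R : ℝ → ℝ) (hR : ContDiff ℝ 1 R)
    (hRb : ∀ T, T₀ ≤ T → |R T| ≤ C * Real.exp (-lam * T))
    (hRd : ∀ T, T₀ ≤ T → |deriv R T| ≤ C * Real.exp (-lam * T)) :
    ∃ μ₀ > 0, ∃ K > 0, ∃ T₁, T₀ ≤ T₁ ∧ ∃ Tf : ℝ → ℝ,
      ∀ μ ∈ Set.Ioc (0:ℝ) μ₀,
        (T₁ ≤ Tf μ ∧ Real.exp (-2*lam*(Tf μ)) * a * (1 + R (Tf μ)) = μ) ∧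
        (∀ T', T₁ ≤ T' → Real.exp (-2*lam*T') * a * (1 + R T') = μ → T' = Tf μ) ∧
        |Tf μ - (|Real.log μ| + Real.log a)/(2*lam)| ≤ K * Real.sqrt μ := by
  have ha0 : 0 < a := by
    have h1 : 0 < lam * (kap * r^2) := by positivity
    nlinarith [hinner]
  -- small threshold
  set m : ℝ := min (1/2 : ℝ) (lam/2) with hm
  have hm0 : 0 < m := lt_min (by norm_num) (by linarith)
  set T₁ : ℝ := max T₀ (Real.log (C / m) / lam) with hT₁def
  have hT₁0 : T₀ ≤ T₁ := le_max_left _ _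
  have hsmall : ∀ T, T₁ ≤ T → C * Real.exp (-lam * T) ≤ m := by
    intro T hT
    have h1 : Real.log (C / m) / lam ≤ T := le_trans (le_max_right _ _) hT
    have h2 : Real.log (C / m) ≤ lam * T := by
      rw [div_le_iff₀ hlam] at h1; linarith [h1]
    have h3 : Real.exp (-lam * T) ≤ Real.exp (-(Real.log (C / m))) := by
      apply Real.exp_le_exp.mpr; linarith
    have h4 : Real.exp (-(Real.log (C / m))) = m / C := by
      rw [Real.exp_neg, Real.exp_log (by positivity)]
      rw [inv_div]
    calc C * Real.exp (-lam * T) ≤ C * (m / C) := by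
          rw [← h4]; exact mul_le_mul_of_nonneg_left h3 hC.le
      _ = m := by field_simp
  have hRhalf : ∀ T, T₁ ≤ T → |R T| ≤ 1/2 := fun T hT =>
    le_trans (hRb T (hT₁0.trans hT)) (le_trans (hsmall T hT) (min_le_left _ _))
  have hRdlam : ∀ T, T₁ ≤ T → |deriv R T| ≤ lam/2 := fun T hT =>
    le_trans (hRd T (hT₁0.trans hT)) (le_trans (hsmall T hT) (min_le_right _ _))
  -- the function f
  have hderiv : ∀ T : ℝ, HasDerivAt (fun T => Real.exp (-2*lam*T) * a * (1 + R T))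
      (Real.exp (-2*lam*T) * a * (deriv R T - 2*lam*(1 + R T))) T := by
    intro T
    have hd1 : HasDerivAt (fun x : ℝ => Real.exp (-2*lam*x))
        (Real.exp (-2*lam*T) * (-2*lam)) T := by
      have := ((hasDerivAt_id T).const_mul (-2*lam)).exp
      simpa using this
    have hd2 : HasDerivAt (fun x : ℝ => Real.exp (-2*lam*x) * a)
        (Real.exp (-2*lam*T) * (-2*lam) * a) T := hd1.mul_const a
    have hd3 : HasDerivAt (fun x : ℝ => 1 + R x) (deriv R T) T := by
      have := ((hR.differentiable (by norm_num)) T).hasDerivAt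
      exact this.const_add 1
    have := hd2.mul hd3
    exact this.congr_deriv (by ring)
  have hdiff : Differentiable ℝ (fun T => Real.exp (-2*lam*T) * a * (1 + R T)) :=
    fun T => (hderiv T).differentiableAt
  have hanti : StrictAntiOn (fun T => Real.exp (-2*lam*T) * a * (1 + R T)) (Set.Ici T₁) := by
    apply strictAntiOn_of_deriv_neg (convex_Ici T₁) hdiff.continuous.continuousOn
    intro x hx
    rw [interior_Ici] at hx
    have hxT : T₁ ≤ x := le_of_lt hx
    rw [(hderiv x).deriv]
    have he : 0 < Real.exp (-2*lam*x) := Real.exp_pos _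
    have h1 : R x ≥ -(1/2) := neg_le_of_abs_le (hRhalf x hxT)
    have h2 : deriv R x ≤ lam/2 := le_of_abs_le (hRdlam x hxT)
    have hb : deriv R x - 2*lam*(1 + R x) < 0 := by nlinarith
    exact mul_neg_of_pos_of_neg (by positivity) hb
  -- μ₀
  set μ₀ : ℝ := min (Real.exp (-2*lam*T₁) * a / 2) (1/2) with hμ₀def
  have hμ₀pos : 0 < μ₀ := lt_min (by positivity) (by norm_num)
  -- K
  set K : ℝ := (C / lam) * Real.sqrt (2 / a) with hKdef
  have hKpos : 0 < K := by
    apply mul_pos (by positivity)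
    exact Real.sqrt_pos.mpr (by positivity)
  refine ⟨μ₀, hμ₀pos, K, hKpos, T₁, hT₁0, ?_⟩
  have hex : ∀ μ : ℝ, ∃ T, μ ∈ Set.Ioc (0:ℝ) μ₀ →
      (T₁ ≤ T ∧ Real.exp (-2*lam*T) * a * (1 + R T) = μ) := by
    intro μ
    by_cases hμ : μ ∈ Set.Ioc (0:ℝ) μ₀
    · obtain ⟨hμpos, hμle⟩ := hμ
      -- upper endpoint value ≥ μ
      have hfT₁ : μ ≤ Real.exp (-2*lam*T₁) * a * (1 + R T₁) := by
        have h1 : R T₁ ≥ -(1/2) := neg_le_of_abs_le (hRhalf T₁ le_rfl)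
        have h2 : μ ≤ Real.exp (-2*lam*T₁) * a / 2 := le_trans hμle (min_le_left _ _)
        nlinarith [Real.exp_pos (-2*lam*T₁), ha0]
      -- find N with value ≤ μ
      set N : ℝ := max T₁ (Real.log (3*a/(2*μ)) / (2*lam)) with hNdef
      have hN1 : T₁ ≤ N := le_max_left _ _
      have hfN : Real.exp (-2*lam*N) * a * (1 + R N) ≤ μ := by
        have h1 : Real.log (3*a/(2*μ)) / (2*lam) ≤ N := le_max_right _ _
        have h2 : Real.log (3*a/(2*μ)) ≤ 2*lam*N := by
          rw [div_le_iff₀ (by positivity)] at h1; linarith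
        have h3 : Real.exp (-2*lam*N) ≤ Real.exp (-(Real.log (3*a/(2*μ)))) := by
          apply Real.exp_le_exp.mpr; linarith
        have h4 : Real.exp (-(Real.log (3*a/(2*μ)))) = 2*μ/(3*a) := by
          rw [Real.exp_neg, Real.exp_log (by positivity)]
          rw [inv_div]
        rw [h4] at h3
        have h5 : R N ≤ 1/2 := le_of_abs_le (hRhalf N hN1)
        have h6 : 0 < Real.exp (-2*lam*N) := Real.exp_pos _
        have h7 : Real.exp (-2*lam*N) * a * (1 + R N) ≤ Real.exp (-2*lam*N) * a * (3/2) := by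
          apply mul_le_mul_of_nonneg_left (by linarith) (by positivity)
        have h8 : Real.exp (-2*lam*N) * a * (3/2) ≤ (2*μ/(3*a)) * a * (3/2) := by
          apply mul_le_mul_of_nonneg_right (mul_le_mul_of_nonneg_right h3 ha0.le) (by norm_num)
        have h9 : (2*μ/(3*a)) * a * (3/2) = μ := by field_simp
        linarith
      have hIVT := intermediate_value_Icc' hN1
        (hdiff.continuous.continuousOn :
          ContinuousOn (fun T => Real.exp (-2*lam*T) * a * (1 + R T)) (Set.Icc T₁ N))
      have hμmem : μ ∈ Set.Icc (Real.exp (-2*lam*N) * a * (1 + R N))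
          (Real.exp (-2*lam*T₁) * a * (1 + R T₁)) := ⟨hfN, hfT₁⟩
      obtain ⟨T, hTmem, hTeq⟩ := hIVT hμmem
      exact ⟨T, fun _ => ⟨hTmem.1, hTeq⟩⟩
    · exact ⟨0, fun h => absurd h hμ⟩
  choose Tf hTf using hex
  refine ⟨Tf, ?_⟩
  intro μ hμ
  obtain ⟨hT1le, hfeq⟩ := hTf μ hμ
  obtain ⟨hμpos, hμle⟩ := hμ
  refine ⟨⟨hT1le, hfeq⟩, ?_, ?_⟩
  · intro T' hT' hfeq'
    exact hanti.injOn hT' hT1le (hfeq'.trans hfeq.symm)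
  · -- asymptotics
    set T := Tf μ with hTdef
    have hRT : |R T| ≤ 1/2 := hRhalf T hT1le
    have h1R : (0:ℝ) < 1 + R T := by
      have := neg_le_of_abs_le hRT; linarith
    have h1R2 : (1:ℝ)/2 ≤ 1 + R T := by
      have := neg_le_of_abs_le hRT; linarith
    -- log identity
    have hlogμ : Real.log μ = -2*lam*T + Real.log a + Real.log (1 + R T) := by
      rw [← hfeq, Real.log_mul (by positivity) (ne_of_gt h1R),
        Real.log_mul (Real.exp_ne_zero _) (ne_of_gt ha0), Real.log_exp]
    have hμlt1 : μ < 1 := lt_of_le_of_lt (le_trans hμle (min_le_right _ _)) (by norm_num)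
    have habsμ : |Real.log μ| = -Real.log μ :=
      abs_of_neg (Real.log_neg hμpos hμlt1)
    have hkey : T - (|Real.log μ| + Real.log a)/(2*lam) = Real.log (1 + R T) / (2*lam) := by
      rw [habsμ, hlogμ]; field_simp; ring
    rw [hkey]
    have hlb : |Real.log (1 + R T)| ≤ 2 * |R T| := aux_abs_log_le _ hRT
    have hRTb : |R T| ≤ C * Real.exp (-lam * T) := hRb T (hT₁0.trans hT1le)
    -- bound exp(-lam T) by sqrt
    have hexp2 : Real.exp (-2*lam*T) ≤ 2*μ/a := by
      have h1 : Real.exp (-2*lam*T) * a * (1/2) ≤ Real.exp (-2*lam*T) * a * (1 + R T) :=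
        mul_le_mul_of_nonneg_left h1R2 (by positivity)
      rw [hfeq] at h1
      rw [le_div_iff₀ ha0]
      nlinarith [Real.exp_pos (-2*lam*T)]
    have hexpsq : Real.exp (-lam*T) ^ 2 = Real.exp (-2*lam*T) := by
      rw [← Real.exp_nat_mul]
      · ring_nf
    have hexpb : Real.exp (-lam*T) ≤ Real.sqrt (2/a) * Real.sqrt μ := by
      rw [← Real.sqrt_mul (by positivity)]
      rw [show (2/a) * μ = 2*μ/a by ring]
      rw [Real.le_sqrt (Real.exp_pos _).le (by positivity)]
      rw [hexpsq]; exact hexp2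
    have hfinal : |Real.log (1 + R T)| / (2*lam) ≤ K * Real.sqrt μ := by
      have h1 : |Real.log (1 + R T)| ≤ 2 * (C * Real.exp (-lam * T)) := by
        calc |Real.log (1 + R T)| ≤ 2 * |R T| := hlb
          _ ≤ 2 * (C * Real.exp (-lam * T)) := by linarith
      have h2 : Real.exp (-lam * T) ≤ Real.sqrt (2/a) * Real.sqrt μ := by
        simpa using hexpb
      rw [hKdef, div_le_iff₀ (by positivity)]
      have h3 : |Real.log (1 + R T)| ≤ 2 * C * (Real.sqrt (2/a) * Real.sqrt μ) := by
        nlinarith [Real.exp_pos (-lam*T)]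
      have h4 : C / lam * Real.sqrt (2/a) * Real.sqrt μ * (2*lam)
          = 2 * C * (Real.sqrt (2/a) * Real.sqrt μ) := by field_simp
      linarith [h3, h4.ge]
    calc |Real.log (1 + R T) / (2*lam)| = |Real.log (1 + R T)| / (2*lam) := by
          rw [abs_div, abs_of_pos (by positivity : (0:ℝ) < 2*lam)]
      _ ≤ K * Real.sqrt μ := hfinal
end
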